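/- Value closeness under an approximate model: consider a finite-horizon process of length H over finite common-information sets C_h, with true per-step expected rewards r_h(c, γ) ∈ [−1, 1] and true increment kernels P_h(z | c, γ), and an approximate model with rewards r̂_h(ĉ, γ) and kernels P̂_h(z | ĉ, γ) where ĉ = Compress_h(c). Suppose for every strategy and step h, the expected (over trajectories of the true process) reward error is at most ε_r and the expected ℓ₁ error of the increment kernels is at most ε_z. Then for any strategy g and any h ∈ [H], the expectation over true trajectories of |V_h^{g,true}(c_h) − V_h^{g,model}(c_h)| is at most (H − h + 1)ε_r + ((H − h + 1)(H − h)/2)ε_z, where V^{g,true} and V^{g,model} are the value functions of g computed under the true kernels/rewards and the model kernels/rewards respectively, with values bounded in absolute value by the remaining horizon. -/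

import Mathlib

/-- Value closeness under an (ε_r, ε_z)-approximate common-information model: if for
every strategy and step the expected (over true trajectories) reward error is at most
ε_r and the expected ℓ₁ increment-kernel error is at most ε_z, then the expected gap
between the true and model value functions of any strategy at step h is at most
(H−h+1)ε_r + ((H−h+1)(H−h)/2)ε_z. -/
theorem stmt7 {C Z Γ Chat : Type*} [Fintype C] [Fintype Z] [Fintype Γ] [DecidableEq C]
    (H : ℕ) (hH : 1 ≤ H)
    (ext : C → Z → C) (c₀ : C)
    (r : ℕ → C → Γ → ℝ) (P : ℕ → C → Γ → Z → ℝ)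
    (compress : ℕ → C → Chat)
    (rhat : ℕ → Chat → Γ → ℝ) (Phat : ℕ → Chat → Γ → Z → ℝ)
    (hr : ∀ h c γ, |r h c γ| ≤ 1) (hrhat : ∀ h ch γ, |rhat h ch γ| ≤ 1)
    (hP0 : ∀ h c γ z, 0 ≤ P h c γ z) (hP1 : ∀ h c γ, ∑ z, P h c γ z = 1)
    (hPhat0 : ∀ h ch γ z, 0 ≤ Phat h ch γ z) (hPhat1 : ∀ h ch γ, ∑ z, Phat h ch γ z = 1)
    (εr εz : ℝ)
    -- occupancy measure over common information of the true process under a strategy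
    (d : (ℕ → C → Γ) → ℕ → C → ℝ)
    (hd1 : ∀ g c, d g 1 c = if c = c₀ then 1 else 0)
    (hdrec : ∀ g h c', d g (h + 1) c' =
        ∑ c, ∑ z, (if ext c z = c' then d g h c * P h c (g h c) z else 0))
    -- per-step expected approximation errors, for every strategy
    (herr_r : ∀ g h, 1 ≤ h → h ≤ H →
        ∑ c, d g h c * |r h c (g h c) - rhat h (compress h c) (g h c)| ≤ εr)
    (herr_z : ∀ g h, 1 ≤ h → h ≤ H →
        ∑ c, d g h c *
          (∑ z, |P h c (g h c) z - Phat h (compress h c) (g h c) z|) ≤ εz)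
    -- true and model value functions of a strategy, defined by backward recursion
    (Vtrue Vmodel : (ℕ → C → Γ) → ℕ → C → ℝ)
    (hVtrue_end : ∀ g c, Vtrue g (H + 1) c = 0)
    (hVmodel_end : ∀ g c, Vmodel g (H + 1) c = 0)
    (hVtrue : ∀ g h c, 1 ≤ h → h ≤ H →
        Vtrue g h c = r h c (g h c) + ∑ z, P h c (g h c) z * Vtrue g (h + 1) (ext c z))
    (hVmodel : ∀ g h c, 1 ≤ h → h ≤ H →
        Vmodel g h c = rhat h (compress h c) (g h c) +
          ∑ z, Phat h (compress h c) (g h c) z * Vmodel g (h + 1) (ext c z)) :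
    ∀ (g : ℕ → C → Γ) (h : ℕ), 1 ≤ h → h ≤ H →
      ∑ c, d g h c * |Vtrue g h c - Vmodel g h c| ≤
        ((H : ℝ) - (h : ℝ) + 1) * εr +
          (((H : ℝ) - (h : ℝ) + 1) * ((H : ℝ) - (h : ℝ)) / 2) * εz := by

  intro g h h1 hhH
  -- nonnegativity of the occupancy measure
  have hd0 : ∀ n c, 0 ≤ d g (n + 1) c := by
    intro n
    induction n with
    | zero => intro c; rw [hd1]; split <;> norm_num
    | succ m ih =>
      intro c
      rw [hdrec]
      refine Finset.sum_nonneg fun c' _ => Finset.sum_nonneg fun z _ => ?_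
      split
      · exact mul_nonneg (ih c') (hP0 _ _ _ _)
      · exact le_refl _
  have hd0' : ∀ n, 1 ≤ n → ∀ c, 0 ≤ d g n c := by
    intro n hn c
    cases n with
    | zero => omega
    | succ m => exact hd0 m c
  -- bound on the model value function
  have hVb : ∀ k hh c, 1 ≤ hh → hh + k = H + 1 → |Vmodel g hh c| ≤ (k : ℝ) := by
    intro k
    induction k with
    | zero =>
      intro hh c _ hk
      have : hh = H + 1 := by omega
      rw [this, hVmodel_end]; simp
    | succ m ih =>
      intro hh c hh1 hk
      rw [hVmodel g hh c hh1 (by omega)]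
      have hb : ∀ z ∈ (Finset.univ : Finset Z),
          |Phat hh (compress hh c) (g hh c) z * Vmodel g (hh + 1) (ext c z)| ≤
            Phat hh (compress hh c) (g hh c) z * (m : ℝ) := by
        intro z _
        rw [abs_mul, abs_of_nonneg (hPhat0 _ _ _ _)]
        exact mul_le_mul_of_nonneg_left (ih (hh + 1) (ext c z) (by omega) (by omega))
          (hPhat0 _ _ _ _)
      calc |rhat hh (compress hh c) (g hh c) +
              ∑ z, Phat hh (compress hh c) (g hh c) z * Vmodel g (hh + 1) (ext c z)|
          ≤ 1 + ∑ z, Phat hh (compress hh c) (g hh c) z * (m : ℝ) := by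
            refine (abs_add_le _ _).trans (add_le_add (hrhat _ _ _) ?_)
            exact (Finset.abs_sum_le_sum_abs _ _).trans (Finset.sum_le_sum hb)
        _ = ((m : ℝ) + 1) := by rw [← Finset.sum_mul, hPhat1]; ring
        _ = ((m + 1 : ℕ) : ℝ) := by push_cast; ring
  -- occupancy-flow identity
  have swap : ∀ (hh : ℕ) (f : C → ℝ),
      ∑ c', d g (hh + 1) c' * f c' =
        ∑ c, d g hh c * ∑ z, P hh c (g hh c) z * f (ext c z) := by
    intro hh f
    simp_rw [hdrec, Finset.sum_mul, ite_mul, zero_mul, Finset.mul_sum]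
    rw [Finset.sum_comm]
    refine Finset.sum_congr rfl fun c _ => ?_
    rw [Finset.sum_comm]
    refine Finset.sum_congr rfl fun z _ => ?_
    rw [Finset.sum_ite_eq]
    simp [mul_assoc]
  -- one-step decomposition
  have step : ∀ hh, 1 ≤ hh → hh ≤ H →
      ∑ c, d g hh c * |Vtrue g hh c - Vmodel g hh c| ≤
        εr + ((H : ℝ) - hh) * εz +
          ∑ c', d g (hh + 1) c' * |Vtrue g (hh + 1) c' - Vmodel g (hh + 1) c'| := by
    intro hh hh1 hhH'
    have hHh : (0 : ℝ) ≤ (H : ℝ) - hh := by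
      have : (hh : ℝ) ≤ (H : ℝ) := by exact_mod_cast hhH'
      linarith
    have hVb' : ∀ x, |Vmodel g (hh + 1) x| ≤ (H : ℝ) - hh := by
      intro x
      have := hVb (H - hh) (hh + 1) x (by omega) (by omega)
      have hc : ((H - hh : ℕ) : ℝ) = (H : ℝ) - hh := by
        rw [Nat.cast_sub hhH']
      linarith [this, hc ▸ this]
    have pt : ∀ c, |Vtrue g hh c - Vmodel g hh c| ≤
        |r hh c (g hh c) - rhat hh (compress hh c) (g hh c)| +
        ((H : ℝ) - hh) *
          (∑ z, |P hh c (g hh c) z - Phat hh (compress hh c) (g hh c) z|) +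
        ∑ z, P hh c (g hh c) z *
          |Vtrue g (hh + 1) (ext c z) - Vmodel g (hh + 1) (ext c z)| := by
      intro c
      rw [hVtrue g hh c hh1 hhH', hVmodel g hh c hh1 hhH']
      have key : ∀ z, |P hh c (g hh c) z * Vtrue g (hh + 1) (ext c z) -
            Phat hh (compress hh c) (g hh c) z * Vmodel g (hh + 1) (ext c z)| ≤
          P hh c (g hh c) z *
            |Vtrue g (hh + 1) (ext c z) - Vmodel g (hh + 1) (ext c z)| +
          |P hh c (g hh c) z - Phat hh (compress hh c) (g hh c) z| * ((H : ℝ) - hh) := by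
        intro z
        have e : P hh c (g hh c) z * Vtrue g (hh + 1) (ext c z) -
            Phat hh (compress hh c) (g hh c) z * Vmodel g (hh + 1) (ext c z) =
            P hh c (g hh c) z *
              (Vtrue g (hh + 1) (ext c z) - Vmodel g (hh + 1) (ext c z)) +
            (P hh c (g hh c) z - Phat hh (compress hh c) (g hh c) z) *
              Vmodel g (hh + 1) (ext c z) := by ring
        rw [e]
        refine (abs_add_le _ _).trans (add_le_add ?_ ?_)
        · rw [abs_mul, abs_of_nonneg (hP0 _ _ _ _)]
        · rw [abs_mul]
          exact mul_le_mul_of_nonneg_left (hVb' (ext c z)) (abs_nonneg _)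
      calc |r hh c (g hh c) + ∑ z, P hh c (g hh c) z * Vtrue g (hh + 1) (ext c z) -
              (rhat hh (compress hh c) (g hh c) +
                ∑ z, Phat hh (compress hh c) (g hh c) z * Vmodel g (hh + 1) (ext c z))|
          = |(r hh c (g hh c) - rhat hh (compress hh c) (g hh c)) +
              ∑ z, (P hh c (g hh c) z * Vtrue g (hh + 1) (ext c z) -
                Phat hh (compress hh c) (g hh c) z * Vmodel g (hh + 1) (ext c z))| := by
            rw [Finset.sum_sub_distrib]; ring_nf
        _ ≤ |r hh c (g hh c) - rhat hh (compress hh c) (g hh c)| +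
            ∑ z, |P hh c (g hh c) z * Vtrue g (hh + 1) (ext c z) -
              Phat hh (compress hh c) (g hh c) z * Vmodel g (hh + 1) (ext c z)| :=
            (abs_add_le _ _).trans (add_le_add (le_refl _) (Finset.abs_sum_le_sum_abs _ _))
        _ ≤ |r hh c (g hh c) - rhat hh (compress hh c) (g hh c)| +
            ∑ z, (P hh c (g hh c) z *
              |Vtrue g (hh + 1) (ext c z) - Vmodel g (hh + 1) (ext c z)| +
              |P hh c (g hh c) z - Phat hh (compress hh c) (g hh c) z| * ((H : ℝ) - hh)) :=
            add_le_add (le_refl _) (Finset.sum_le_sum fun z _ => key z)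
        _ = |r hh c (g hh c) - rhat hh (compress hh c) (g hh c)| +
            ((H : ℝ) - hh) *
              (∑ z, |P hh c (g hh c) z - Phat hh (compress hh c) (g hh c) z|) +
            ∑ z, P hh c (g hh c) z *
              |Vtrue g (hh + 1) (ext c z) - Vmodel g (hh + 1) (ext c z)| := by
            simp_rw [Finset.sum_add_distrib, ← Finset.sum_mul]
            ring
    calc ∑ c, d g hh c * |Vtrue g hh c - Vmodel g hh c|
        ≤ ∑ c, d g hh c *
            (|r hh c (g hh c) - rhat hh (compress hh c) (g hh c)| +
             ((H : ℝ) - hh) *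
               (∑ z, |P hh c (g hh c) z - Phat hh (compress hh c) (g hh c) z|) +
             ∑ z, P hh c (g hh c) z *
               |Vtrue g (hh + 1) (ext c z) - Vmodel g (hh + 1) (ext c z)|) :=
          Finset.sum_le_sum fun c _ =>
            mul_le_mul_of_nonneg_left (pt c) (hd0' hh hh1 c)
      _ = (∑ c, d g hh c * |r hh c (g hh c) - rhat hh (compress hh c) (g hh c)|) +
          ((H : ℝ) - hh) * ∑ c, d g hh c *
            (∑ z, |P hh c (g hh c) z - Phat hh (compress hh c) (g hh c) z|) +
          ∑ c, d g hh c * ∑ z, P hh c (g hh c) z *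
            |Vtrue g (hh + 1) (ext c z) - Vmodel g (hh + 1) (ext c z)| := by
          have e2 : ∀ c, d g hh c *
              (|r hh c (g hh c) - rhat hh (compress hh c) (g hh c)| +
               ((H : ℝ) - hh) *
                 (∑ z, |P hh c (g hh c) z - Phat hh (compress hh c) (g hh c) z|) +
               ∑ z, P hh c (g hh c) z *
                 |Vtrue g (hh + 1) (ext c z) - Vmodel g (hh + 1) (ext c z)|) =
              d g hh c * |r hh c (g hh c) - rhat hh (compress hh c) (g hh c)| +
              ((H : ℝ) - hh) * (d g hh c *
                (∑ z, |P hh c (g hh c) z - Phat hh (compress hh c) (g hh c) z|)) +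
              d g hh c * ∑ z, P hh c (g hh c) z *
                |Vtrue g (hh + 1) (ext c z) - Vmodel g (hh + 1) (ext c z)| := fun c => by ring
          simp_rw [e2, Finset.sum_add_distrib, ← Finset.mul_sum]
      _ ≤ εr + ((H : ℝ) - hh) * εz +
          ∑ c', d g (hh + 1) c' * |Vtrue g (hh + 1) c' - Vmodel g (hh + 1) c'| := by
          rw [swap hh (fun c' => |Vtrue g (hh + 1) c' - Vmodel g (hh + 1) c'|)]
          exact add_le_add (add_le_add (herr_r g hh hh1 hhH')
            (mul_le_mul_of_nonneg_left (herr_z g hh hh1 hhH') hHh)) (le_refl _)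
  -- the main downward induction
  have key : ∀ k hh, 1 ≤ hh → hh + k = H →
      ∑ c, d g hh c * |Vtrue g hh c - Vmodel g hh c| ≤
        ((k : ℝ) + 1) * εr + (((k : ℝ) + 1) * (k : ℝ) / 2) * εz := by
    intro k
    induction k with
    | zero =>
      intro hh hh1 hk
      have hhH' : hh ≤ H := by omega
      refine (step hh hh1 hhH').trans ?_
      have h2 : hh + 1 = H + 1 := by omega
      have hz : ∑ c', d g (hh + 1) c' * |Vtrue g (hh + 1) c' - Vmodel g (hh + 1) c'| = 0 := by
        rw [h2]; simp [hVtrue_end, hVmodel_end]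
      have hh0 : (H : ℝ) - hh = 0 := by
        have : hh = H := by omega
        rw [this]; ring
      rw [hz, hh0]
      norm_num
    | succ m ih =>
      intro hh hh1 hk
      refine (step hh hh1 (by omega)).trans ?_
      have hih := ih (hh + 1) (by omega) (by omega)
      have hcast : (H : ℝ) - hh = (m : ℝ) + 1 := by
        have h' : H = hh + (m + 1) := hk.symm
        rw [h']; push_cast; ring
      calc εr + ((H : ℝ) - hh) * εz +
              ∑ c', d g (hh + 1) c' * |Vtrue g (hh + 1) c' - Vmodel g (hh + 1) c'|
          ≤ εr + ((m : ℝ) + 1) * εz +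
              (((m : ℝ) + 1) * εr + (((m : ℝ) + 1) * (m : ℝ) / 2) * εz) := by
            rw [hcast]; linarith
        _ = (((m + 1 : ℕ) : ℝ) + 1) * εr +
              ((((m + 1 : ℕ) : ℝ) + 1) * ((m + 1 : ℕ) : ℝ) / 2) * εz := by
            push_cast; ring
  obtain ⟨k, hk⟩ : ∃ k, h + k = H := ⟨H - h, by omega⟩
  have hmain := key k h h1 hk
  have hc1 : (H : ℝ) - (h : ℝ) + 1 = (k : ℝ) + 1 := by
    rw [← hk]; push_cast; ring
  have hc2 : (H : ℝ) - (h : ℝ) = (k : ℝ) := by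
    rw [← hk]; push_cast; ring
  rw [hc1, hc2]
  exact hmain
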